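/- Fix an integer r ≥ 1. Then f(d,r) ~ (log d / (r·d))^{1/r} as d → ∞; that is, f(d,r)·(r·d/ log d)^{1/r} → 1 as d → ∞. -/

import Mathlib

set_option maxHeartbeats 1000000

open Filter Real


lemma aux_bounds (r k : ℕ) (hr : 1 ≤ r) (hk : 1 ≤ k) (u : ℝ) (hu0 : 0 < u)
    (hsum : Summable (fun m : ℕ => ((m + k).choose k : ℝ) * u ^ (r * m + 1) / (r * m + 1)))
    (htsum : ∑' m : ℕ, ((m + k).choose k : ℝ) * u ^ (r * m + 1) / (r * m + 1) = 1) :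
    u < 1 ∧ (1 - u ^ r) ^ (k + 1) ≤ u ∧
      1 ≤ (1 - u ^ r) ^ k * (1 + r * k * u ^ (r - 1)) := by
  set a : ℕ → ℝ := fun m => ((m + k).choose k : ℝ) * u ^ (r * m + 1) / (r * m + 1) with ha
  have hanonneg : ∀ m, 0 ≤ a m := by
    intro m
    have : (0:ℝ) < (r*m+1 : ℕ) := by positivity
    have h1 : (0:ℝ) ≤ ((m + k).choose k : ℝ) := by positivity
    have h2 : (0:ℝ) ≤ u ^ (r*m+1) := by positivity
    have h3 : (0:ℝ) < (r:ℝ)*m+1 := by positivity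
    positivity
  -- u < 1
  have hu1 : u < 1 := by
    by_contra h
    push_neg at h
    have h2 : a 0 + a 1 ≤ 1 := by
      have := Summable.sum_le_tsum (Finset.range 2) (fun m _ => hanonneg m) hsum
      rw [htsum] at this
      simpa [Finset.sum_range_succ] using this
    have e0 : a 0 = u := by simp [ha]
    have e1 : a 1 = (k+1 : ℝ) * u ^ (r+1) / (r+1) := by
      have hck : (1+k).choose k = k+1 := by rw [Nat.add_comm]; exact Nat.choose_succ_self_right k
      simp [ha, hck, mul_comm]
    have hur : (1:ℝ) ≤ u ^ (r+1) := one_le_pow₀ h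
    have hk' : (1:ℝ) ≤ (k:ℝ) := by exact_mod_cast hk
    have hr1 : (0:ℝ) < (r:ℝ) + 1 := by positivity
    have hpos : (0:ℝ) < (k+1 : ℝ) * u ^ (r+1) / (r+1) := by positivity
    rw [e0, e1] at h2
    have : (1:ℝ) ≤ (k+1 : ℝ) * u ^ (r+1) / (r+1) := by
      rw [le_div_iff₀ hr1]
      nlinarith
    linarith
  have hx0 : 0 < u ^ r := by positivity
  have hx1 : u ^ r < 1 := pow_lt_one₀ hu0.le hu1 (by omega)
  set x := u ^ r with hxdef
  have h1x : 0 < 1 - x := by linarith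
  constructor
  · exact hu1
  constructor
  · -- P2 : (1-x)^(k+1) ≤ u
    have hb : HasSum (fun m : ℕ => u * (((m + k).choose k : ℝ) * x ^ m))
        (u * (1 / (1 - x) ^ (k+1))) := by
      refine (hasSum_choose_mul_geometric_of_norm_lt_one k ?_).mul_left u
      rw [Real.norm_eq_abs, abs_of_pos hx0]
      exact hx1
    have hab : ∀ m, a m ≤ u * (((m + k).choose k : ℝ) * x ^ m) := by
      intro m
      have hxm : u ^ (r*m+1) = u * x ^ m := by
        rw [hxdef, pow_succ, pow_mul]; ring
      have h3 : (1:ℝ) ≤ (r:ℝ)*m+1 := by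
        have : (0:ℝ) ≤ (r:ℝ)*m := by positivity
        linarith
      have h1 : (0:ℝ) ≤ ((m + k).choose k : ℝ) * u ^ (r*m+1) := by positivity
      calc a m ≤ ((m + k).choose k : ℝ) * u ^ (r*m+1) := div_le_self h1 h3
           _ = u * (((m + k).choose k : ℝ) * x ^ m) := by rw [hxm]; ring
    have hle : (1:ℝ) ≤ u * (1 / (1 - x) ^ (k+1)) := by
      calc (1:ℝ) = ∑' m, a m := htsum.symm
        _ ≤ ∑' m, u * (((m + k).choose k : ℝ) * x ^ m) := Summable.tsum_le_tsum hab hsum hb.summable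
        _ = u * (1 / (1 - x) ^ (k+1)) := hb.tsum_eq
    have hp : 0 < (1 - x) ^ (k+1) := by positivity
    rw [mul_one_div, le_div_iff₀ hp, one_mul] at hle
    exact hle
  · -- P3
    have hxnorm : ‖x‖ < 1 := by rw [Real.norm_eq_abs, abs_of_pos hx0]; exact hx1
    have hs0 : HasSum (fun n : ℕ => ((n + (k-1)).choose (k-1) : ℝ) * x ^ n)
        (1 / (1 - x) ^ ((k-1)+1)) := hasSum_choose_mul_geometric_of_norm_lt_one (k-1) hxnorm
    have hk1 : k - 1 + 1 = k := by omega
    rw [hk1] at hs0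
    -- shift by one
    have hs1 : HasSum (fun m : ℕ => (((m+1) + (k-1)).choose (k-1) : ℝ) * x ^ (m+1))
        (1 / (1 - x) ^ k - 1) := by
      rw [hasSum_nat_add_iff (f := fun n : ℕ => ((n + (k-1)).choose (k-1) : ℝ) * x ^ n) 1]
      simpa using hs0
    -- c m ≤ a m with scaled identity
    set c : ℕ → ℝ := fun m => ((m + k).choose k : ℝ) * u ^ (r * m + 1) / (r * (m+1)) with hc
    have hscale : ∀ m : ℕ, (r : ℝ) * k * u ^ (r-1) * c m
        = (((m+1) + (k-1)).choose (k-1) : ℝ) * x ^ (m+1) := by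
      intro m
      have h2 : (m+1) + (k-1) = m + k := by omega
      have hid : (k:ℝ) * ((m + k).choose k : ℝ) = ((m:ℝ)+1) * (((m+1) + (k-1)).choose (k-1) : ℝ) := by
        rw [h2]
        have h1 := Nat.choose_succ_right_eq (m+k) (k-1)
        rw [hk1] at h1
        have h3 : m + k - (k-1) = m + 1 := by omega
        rw [h3] at h1
        have h5 : ((m+k).choose (k-1) : ℝ) * ((m:ℝ)+1) = ((m+k).choose k : ℝ) * (k:ℝ) := by
          exact_mod_cast h1.symm
        linarith [h5]
      have hpow : u ^ (r-1) * u ^ (r*m+1) = x ^ (m+1) := by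
        rw [hxdef, ← pow_add, ← pow_mul, Nat.mul_add, Nat.mul_one]
        congr 1
        omega
      have hm1 : ((m:ℝ)+1) ≠ 0 := by positivity
      have hr0 : ((r:ℝ)) ≠ 0 := by positivity
      have step : (r:ℝ)*k*u^(r-1) * (((m + k).choose k : ℝ) * u^(r*m+1) / ((r:ℝ)*((m:ℝ)+1)))
          = ((k:ℝ) * ((m + k).choose k : ℝ)) * (u^(r-1)*u^(r*m+1)) / ((m:ℝ)+1) := by
        field_simp
      show (r:ℝ)*k*u^(r-1) * (((m + k).choose k : ℝ) * u^(r*m+1) / ((r:ℝ)*((m:ℝ)+1))) = _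
      rw [step, hid, hpow]
      field_simp
    have coefpos : (0:ℝ) < (r:ℝ)*k*u^(r-1) := by
      have : (0:ℝ) < (k:ℝ) := by exact_mod_cast hk
      positivity
    have hsc : HasSum (fun m => (r : ℝ) * k * u ^ (r-1) * c m) (1 / (1 - x) ^ k - 1) :=
      hs1.congr_fun (fun m => hscale m)
    have hcsum : Summable c := by
      have h1 := hsc.summable.mul_left ((r:ℝ)*k*u^(r-1))⁻¹
      refine h1.congr (fun m => ?_)
      field_simp
    have hca : ∀ m, c m ≤ a m := by
      intro m
      have h1 : (0:ℝ) ≤ ((m + k).choose k : ℝ) * u ^ (r*m+1) := by positivity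
      have h2 : (0:ℝ) < (r:ℝ)*m+1 := by positivity
      have h3 : (r:ℝ)*m+1 ≤ (r:ℝ)*((m:ℝ)+1) := by
        have : (1:ℝ) ≤ (r:ℝ) := by exact_mod_cast hr
        nlinarith
      exact div_le_div_of_nonneg_left h1 h2 h3
    have htc : ∑' m, c m ≤ 1 := by
      rw [← htsum]
      exact Summable.tsum_le_tsum hca hcsum hsum
    have heq : (r:ℝ)*k*u^(r-1) * ∑' m, c m = 1 / (1 - x) ^ k - 1 := by
      rw [← tsum_mul_left]
      exact hsc.tsum_eq
    have hS : 1 / (1 - x) ^ k - 1 ≤ (r:ℝ)*k*u^(r-1) := by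
      nlinarith [htc, coefpos, heq]
    have hp : (0:ℝ) < (1 - x) ^ k := by positivity
    have : 1 / (1 - x) ^ k ≤ 1 + (r:ℝ)*k*u^(r-1) := by linarith
    rw [div_le_iff₀ hp] at this
    calc (1:ℝ) = 1 / (1 - x) ^ k * (1 - x)^k := by field_simp
      _ ≤ (1 + (r:ℝ)*k*u^(r-1)) * (1-x)^k := by
          apply mul_le_mul_of_nonneg_right _ hp.le
          rw [← div_le_iff₀ hp] at this
          exact this
      _ = (1 - u ^ r) ^ k * (1 + r * k * u ^ (r - 1)) := by rw [hxdef]; ring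


lemma log_ratio_one (w : ℕ → ℝ) (c : ℝ) (hc : 0 < c)
    (h : Filter.Tendsto (fun d : ℕ => w d / d) atTop (nhds c)) :
    Filter.Tendsto (fun d : ℕ => Real.log (w d) / Real.log d) atTop (nhds 1) := by
  have hw : ∀ᶠ d : ℕ in atTop, 0 < w d := by
    have h2 : ∀ᶠ d : ℕ in atTop, c/2 < w d / d := h.eventually (eventually_gt_nhds (by linarith))
    filter_upwards [h2, eventually_ge_atTop 1] with d hd hd1
    have hd0 : (0:ℝ) < d := by exact_mod_cast hd1
    have h4 : 0 < w d / d := (half_pos hc).trans hd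
    have h5 : w d = (w d / d) * d := by field_simp
    rw [h5]; exact mul_pos h4 hd0
  have hL : Tendsto (fun d : ℕ => Real.log d) atTop atTop :=
    Real.tendsto_log_atTop.comp tendsto_natCast_atTop_atTop
  have h2 : Tendsto (fun d : ℕ => Real.log (w d / d)) atTop (nhds (Real.log c)) :=
    ((Real.continuousAt_log hc.ne').tendsto.comp h)
  have h3 : Tendsto (fun d : ℕ => Real.log (w d / d) / Real.log d) atTop (nhds 0) :=
    h2.div_atTop hL
  have final : Tendsto (fun d : ℕ => Real.log (w d / d) / Real.log d + 1) atTop (nhds 1) := by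
    simpa using h3.add (tendsto_const_nhds (x := (1:ℝ)))
  refine final.congr' ?_
  filter_upwards [hw, eventually_ge_atTop 2] with d hwd hd2
  have hd1 : (1:ℝ) < (d:ℝ) := by exact_mod_cast hd2
  have hd0 : (0:ℝ) < (d:ℝ) := by linarith
  have hlogd : Real.log d ≠ 0 := ne_of_gt (Real.log_pos hd1)
  rw [Real.log_div hwd.ne' hd0.ne']
  field_simp
  ring

lemma sub_div_tendsto (c : ℝ) :
    Filter.Tendsto (fun d : ℕ => ((d:ℝ)-c)/d) atTop (nhds 1) := by
  have h1 : Tendsto (fun d : ℕ => 1 - c/(d:ℝ)) atTop (nhds 1) := by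
    simpa using (tendsto_const_nhds (x := (1:ℝ))).sub (tendsto_const_div_atTop_nhds_zero_nat c)
  refine h1.congr' ?_
  filter_upwards [eventually_ge_atTop 1] with d hd
  have hd0 : ((d:ℝ)) ≠ 0 := by positivity
  field_simp

lemma div_sub_tendsto (c : ℝ) :
    Filter.Tendsto (fun d : ℕ => (d:ℝ)/((d:ℝ)-c)) atTop (nhds 1) := by
  have := (sub_div_tendsto c).inv₀ one_ne_zero
  simp only [inv_div, inv_one] at this
  exact this

lemma lognat_div_tendsto : Filter.Tendsto (fun d : ℕ => Real.log d / d) atTop (nhds 0) :=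
  Real.isLittleO_log_id_atTop.tendsto_div_nhds_zero.comp tendsto_natCast_atTop_atTop

theorem f_asymptotics (r : ℕ) (hr : 1 ≤ r) (u : ℕ → ℝ)
    (hu : ∀ d : ℕ, 2 ≤ d → 0 < u d ∧
      Summable (fun m : ℕ =>
        ((m + d - 2).choose (d - 2) : ℝ) * u d ^ (r * m + 1) / (r * m + 1)) ∧
      ∑' m : ℕ, ((m + d - 2).choose (d - 2) : ℝ) * u d ^ (r * m + 1) / (r * m + 1) = 1) :
    Filter.Tendsto
      (fun d : ℕ => (u d - u d ^ (r + 1) / (r + 1)) *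
        (((r : ℝ) * d / Real.log d) ^ ((1 : ℝ) / r)))
      Filter.atTop (nhds 1) := by
  have hr0 : (0:ℝ) < (r:ℝ) := by exact_mod_cast hr
  have hr1 : (1:ℝ) ≤ (r:ℝ) := by exact_mod_cast hr
  set x : ℕ → ℝ := fun d => u d ^ r with hxdef
  set L : ℕ → ℝ := fun d => Real.log d with hLdef
  set l : ℕ → ℝ := fun d => Real.log (1 + r * ((d:ℝ) - 2)) with hldef
  set U1 : ℕ → ℝ := fun d => l d / ((d:ℝ) - 2) with hU1def
  set p : ℝ := ((r:ℝ) - 1) / r with hpdef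
  set C : ℕ → ℝ := fun d => r * ((d:ℝ)-2) ^ ((1:ℝ)/r) * (l d) ^ p with hCdef
  set B2 : ℕ → ℝ := fun d => 1 + r * ((d:ℝ)-2) * (U1 d) ^ p with hB2def
  have hp0 : 0 ≤ p := by rw [hpdef]; apply div_nonneg <;> linarith
  -- basic limit facts
  have hLtop : Tendsto L atTop atTop :=
    Real.tendsto_log_atTop.comp tendsto_natCast_atTop_atTop
  have hd2top : Tendsto (fun d : ℕ => (d:ℝ) - 2) atTop atTop :=
    tendsto_atTop_add_const_right _ (-2) tendsto_natCast_atTop_atTop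
  have hwl : Tendsto (fun d : ℕ => (1 + (r:ℝ) * ((d:ℝ) - 2)) / d) atTop (nhds (r:ℝ)) := by
    have h1 : Tendsto (fun d : ℕ => (1 - 2*(r:ℝ))/(d:ℝ) + (r:ℝ)) atTop (nhds (r:ℝ)) := by
      simpa using (tendsto_const_div_atTop_nhds_zero_nat (1 - 2*(r:ℝ))).add
        (tendsto_const_nhds (x := (r:ℝ)))
    refine h1.congr' ?_
    filter_upwards [eventually_ge_atTop 1] with d hd
    have hd0 : ((d:ℝ)) ≠ 0 := by positivity
    field_simp
    ring
  have hlL : Tendsto (fun d : ℕ => l d / L d) atTop (nhds 1) :=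
    log_ratio_one _ _ hr0 hwl
  have hltop : Tendsto l atTop atTop := by
    apply Real.tendsto_log_atTop.comp
    apply tendsto_atTop_add_const_left
    exact hd2top.const_mul_atTop hr0
  have hd2L : Tendsto (fun d : ℕ => Real.log ((d:ℝ)-2) / L d) atTop (nhds 1) :=
    log_ratio_one _ _ one_pos (sub_div_tendsto 2)
  have hlogl : Tendsto (fun d : ℕ => Real.log (l d) / L d) atTop (nhds 0) := by
    have h1 : Tendsto (fun d : ℕ => Real.log (l d) / l d) atTop (nhds 0) :=
      Real.isLittleO_log_id_atTop.tendsto_div_nhds_zero.comp hltop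
    have h2 : Tendsto (fun d : ℕ => (Real.log (l d) / l d) * (l d / L d)) atTop (nhds 0) := by
      simpa using h1.mul hlL
    refine Tendsto.congr' ?_ h2
    filter_upwards [hltop.eventually_ge_atTop 1, eventually_ge_atTop 2] with d h3 h4
    have hl0 : l d ≠ 0 := by linarith
    have hL0 : L d ≠ 0 := by
      have : (1:ℝ) < d := by exact_mod_cast h4
      exact ne_of_gt (Real.log_pos this)
    field_simp
  have hLd2 : Tendsto (fun d : ℕ => L d / ((d:ℝ)-2)) atTop (nhds 0) := by
    have h1 : Tendsto (fun d : ℕ => (L d / d) * ((d:ℝ)/((d:ℝ)-2))) atTop (nhds 0) := by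
      simpa using lognat_div_tendsto.mul (div_sub_tendsto 2)
    refine Tendsto.congr' ?_ h1
    filter_upwards [eventually_ge_atTop 3] with d hd
    have h3 : (3:ℝ) ≤ (d:ℝ) := by exact_mod_cast hd
    have h1' : ((d:ℝ)) ≠ 0 := by linarith
    have h2 : ((d:ℝ)) - 2 ≠ 0 := by linarith
    field_simp
  have hU1to0 : Tendsto U1 atTop (nhds 0) := by
    have h1 : Tendsto (fun d : ℕ => (l d / L d) * (L d / ((d:ℝ)-2))) atTop (nhds 0) := by
      simpa using hlL.mul hLd2
    refine Tendsto.congr' ?_ h1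
    filter_upwards [eventually_ge_atTop 3] with d hd
    have h3 : (3:ℝ) ≤ (d:ℝ) := by exact_mod_cast hd
    have hL0 : L d ≠ 0 := by
      have : (1:ℝ) < d := by linarith
      exact ne_of_gt (Real.log_pos this)
    have h2 : ((d:ℝ)) - 2 ≠ 0 := by linarith
    simp only [hU1def]
    field_simp
  have hCtop : Tendsto C atTop atTop := by
    have hbase : Tendsto (fun d : ℕ => ((d:ℝ)-2) ^ ((1:ℝ)/r)) atTop atTop :=
      (tendsto_rpow_atTop (by positivity)).comp hd2top
    refine tendsto_atTop_mono' atTop ?_ hbase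
    filter_upwards [hltop.eventually_ge_atTop 1, hd2top.eventually_ge_atTop 0] with d hl1 hd20
    have h1 : (1:ℝ) ≤ (l d) ^ p := by
      calc (1:ℝ) = (1:ℝ) ^ p := (Real.one_rpow p).symm
        _ ≤ (l d) ^ p := Real.rpow_le_rpow (by norm_num) hl1 hp0
    have h2 : (0:ℝ) ≤ ((d:ℝ)-2) ^ ((1:ℝ)/r) := Real.rpow_nonneg hd20 _
    simp only [hCdef]
    calc ((d:ℝ) - 2) ^ ((1:ℝ)/r) = 1 * (((d:ℝ)-2) ^ ((1:ℝ)/r)) * 1 := by ring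
      _ ≤ (r:ℝ) * (((d:ℝ)-2) ^ ((1:ℝ)/r)) * l d ^ p := by
          apply mul_le_mul _ h1 zero_le_one (mul_nonneg hr0.le h2)
          exact mul_le_mul hr1 le_rfl h2 (by linarith)
  have hlogC : Tendsto (fun d : ℕ => Real.log (C d) / L d) atTop (nhds (1/(r:ℝ))) := by
    have t1 : Tendsto (fun d : ℕ => Real.log r / L d) atTop (nhds 0) :=
      tendsto_const_nhds.div_atTop hLtop
    have hsum : Tendsto (fun d : ℕ => Real.log r / L d + (1/(r:ℝ)) * (Real.log ((d:ℝ)-2) / L d)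
        + p * (Real.log (l d) / L d)) atTop (nhds (1/(r:ℝ))) := by
      have := (t1.add ((tendsto_const_nhds (x := 1/(r:ℝ))).mul hd2L)).add
        ((tendsto_const_nhds (x := p)).mul hlogl)
      simpa using this
    refine Tendsto.congr' ?_ hsum
    filter_upwards [hd2top.eventually_ge_atTop 1, hltop.eventually_ge_atTop 1] with d hd2 hl1
    have hd2pos : (0:ℝ) < (d:ℝ)-2 := by linarith
    have hlpos : (0:ℝ) < l d := by linarith
    have e1 : Real.log (C d) = Real.log r + (1/(r:ℝ)) * Real.log ((d:ℝ)-2) + p * Real.log (l d) := by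
      simp only [hCdef]
      rw [Real.log_mul (by positivity) (by positivity), Real.log_mul (by positivity) (by positivity),
        Real.log_rpow hd2pos, Real.log_rpow hlpos]
    rw [e1, add_div, add_div, mul_div_assoc, mul_div_assoc]
  have hB2C : ∀ᶠ d : ℕ in atTop, B2 d = 1 + C d := by
    filter_upwards [hd2top.eventually_ge_atTop 1, hltop.eventually_ge_atTop 1] with d hd2 hl1
    have hd2pos : (0:ℝ) < (d:ℝ)-2 := by linarith
    have hlpos : (0:ℝ) < l d := by linarith
    simp only [hB2def, hCdef, hU1def]
    rw [Real.div_rpow hlpos.le hd2pos.le]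
    have e3 : ((d:ℝ)-2) ^ ((1:ℝ)/r) * ((d:ℝ)-2) ^ p = (d:ℝ)-2 := by
      rw [← Real.rpow_add hd2pos]
      rw [show (1:ℝ)/r + p = 1 from by rw [hpdef]; field_simp; ring]
      exact Real.rpow_one _
    have h4 : ((d:ℝ)-2)^p ≠ 0 := by positivity
    have key : ((d:ℝ)-2) / ((d:ℝ)-2)^p = ((d:ℝ)-2)^((1:ℝ)/r) := by
      rw [eq_comm, eq_div_iff h4]
      exact e3
    calc 1 + (r:ℝ)*((d:ℝ)-2)*(l d^p/((d:ℝ)-2)^p)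
        = 1 + (r:ℝ)*(((d:ℝ)-2)/((d:ℝ)-2)^p)*l d^p := by ring
      _ = 1 + (r:ℝ)*(((d:ℝ)-2)^((1:ℝ)/r))*l d^p := by rw [key]
      _ = 1 + (r:ℝ)*((d:ℝ)-2)^((1:ℝ)/r)*l d^p := by ring
  have hCpos : ∀ᶠ d : ℕ in atTop, 1 ≤ C d := hCtop.eventually_ge_atTop 1
  have ht2 : Tendsto (fun d : ℕ => Real.log ((1 + C d)/C d)) atTop (nhds 0) := by
    have h2 : Tendsto (fun d : ℕ => (C d)⁻¹ + 1) atTop (nhds 1) := by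
      simpa using (hCtop.inv_tendsto_atTop).add (tendsto_const_nhds (x := (1:ℝ)))
    have h1 : Tendsto (fun d : ℕ => (1 + C d)/C d) atTop (nhds 1) := by
      refine Tendsto.congr' ?_ h2
      filter_upwards [hCpos] with d h
      have hC0 : C d ≠ 0 := by linarith
      field_simp
    have := (Real.continuousAt_log one_ne_zero).tendsto.comp h1
    rw [Real.log_one] at this; exact this
  have hlogB2 : Tendsto (fun d : ℕ => Real.log (B2 d) / L d) atTop (nhds (1/(r:ℝ))) := by
    have h1 := hlogC.add (ht2.div_atTop hLtop)
    rw [add_zero] at h1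
    refine Tendsto.congr' ?_ h1
    filter_upwards [hB2C, hCpos] with d hB2e hC1
    have hCpos' : (0:ℝ) < C d := lt_of_lt_of_le one_pos hC1
    have h1C : (0:ℝ) < 1 + C d := by linarith
    rw [Real.log_div (ne_of_gt h1C) (ne_of_gt hCpos'), hB2e, ← add_div]
    congr 1
    ring
  -- facts from the functional equation
  have hfacts : ∀ᶠ d : ℕ in atTop, 0 < u d ∧ u d < 1 ∧ (1 - x d) ^ (d-1) ≤ u d ∧
      1 ≤ (1 - x d) ^ (d-2) * (1 + (r:ℝ) * ((d:ℝ)-2) * u d ^ (r-1)) := by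
    filter_upwards [eventually_ge_atTop 3] with d hd
    obtain ⟨k, rfl⟩ : ∃ k, d = k + 2 := ⟨d - 2, by omega⟩
    obtain ⟨hu0, hs, ht⟩ := hu (k+2) (by omega)
    have hk : 1 ≤ k := by omega
    have hidx : ∀ m : ℕ, m + (k+2) - 2 = m + k := fun m => by omega
    have hs' : Summable (fun m : ℕ =>
        ((m + k).choose k : ℝ) * u (k+2) ^ (r * m + 1) / (r * m + 1)) := by
      simpa only [hidx, Nat.add_sub_cancel] using hs
    have ht' : ∑' m : ℕ, ((m + k).choose k : ℝ) * u (k+2) ^ (r * m + 1) / (r * m + 1) = 1 := by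
      simpa only [hidx, Nat.add_sub_cancel] using ht
    obtain ⟨h1, h2, h3⟩ := aux_bounds r k hr hk (u (k+2)) hu0 hs' ht'
    refine ⟨hu0, h1, ?_, ?_⟩
    · have e1 : k + 2 - 1 = k + 1 := by omega
      rw [e1]
      simpa only [hxdef] using h2
    · have e2 : k + 2 - 2 = k := by omega
      rw [e2]
      have e4 : (((k+2 : ℕ)):ℝ) - 2 = (k:ℝ) := by push_cast; ring
      rw [e4]
      simpa only [hxdef] using h3
  have hA : ∀ᶠ d : ℕ in atTop,
      ((d:ℝ)-2) * x d ≤ Real.log (1 + (r:ℝ)*((d:ℝ)-2) * u d ^ (r-1)) := by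
    filter_upwards [hfacts, eventually_ge_atTop 3] with d hf hd3
    obtain ⟨hu0, hu1, hP2, hP3⟩ := hf
    have hx0 : 0 < x d := by simp only [hxdef]; positivity
    have hx1 : x d < 1 := by
      simp only [hxdef]; exact pow_lt_one₀ hu0.le hu1 (by omega)
    have h1x : 0 < 1 - x d := by linarith
    have h3d : (3:ℝ) ≤ (d:ℝ) := by exact_mod_cast hd3
    have hd2 : (0:ℝ) ≤ (d:ℝ)-2 := by linarith
    have hB0pos : (0:ℝ) < 1 + (r:ℝ)*((d:ℝ)-2)*u d ^ (r-1) := by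
      have : (0:ℝ) ≤ (r:ℝ)*((d:ℝ)-2)*u d ^ (r-1) := by
        apply mul_nonneg (mul_nonneg hr0.le hd2) (by positivity)
      linarith
    have hlog : 0 ≤ ((d-2 : ℕ):ℝ) * Real.log (1 - x d)
        + Real.log (1 + (r:ℝ)*((d:ℝ)-2)*u d^(r-1)) := by
      have h5 := Real.log_le_log one_pos hP3
      rw [Real.log_one, Real.log_mul (by positivity) (ne_of_gt hB0pos), Real.log_pow] at h5
      linarith
    have hcast : ((d-2:ℕ):ℝ) = (d:ℝ)-2 := by
      rw [Nat.cast_sub (by omega : 2 ≤ d)]; norm_num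
    rw [hcast] at hlog
    have hlx : Real.log (1 - x d) ≤ -(x d) := by
      have := Real.log_le_sub_one_of_pos h1x
      linarith
    nlinarith [mul_le_mul_of_nonneg_left hlx hd2]
  have hB : ∀ᶠ d : ℕ in atTop, ((d:ℝ)-2) * x d ≤ l d := by
    filter_upwards [hA, hfacts, eventually_ge_atTop 3] with d ha hf hd3
    obtain ⟨hu0, hu1, _, _⟩ := hf
    have hur1 : u d ^ (r-1) ≤ 1 := pow_le_one₀ hu0.le hu1.le
    have h3d : (3:ℝ) ≤ (d:ℝ) := by exact_mod_cast hd3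
    have hd2 : (0:ℝ) ≤ (d:ℝ)-2 := by linarith
    refine ha.trans (Real.log_le_log ?_ ?_)
    · have : (0:ℝ) ≤ (r:ℝ)*((d:ℝ)-2)*u d ^ (r-1) := by
        apply mul_nonneg (mul_nonneg hr0.le hd2) (by positivity)
      linarith
    · nlinarith [mul_le_mul_of_nonneg_left hur1 (mul_nonneg hr0.le hd2)]
  have hxU1 : ∀ᶠ d : ℕ in atTop, x d ≤ U1 d := by
    filter_upwards [hB, eventually_ge_atTop 3] with d hb hd3
    have h3d : (3:ℝ) ≤ (d:ℝ) := by exact_mod_cast hd3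
    have hd2pos : (0:ℝ) < (d:ℝ)-2 := by linarith
    simp only [hU1def]
    rw [le_div_iff₀ hd2pos]
    linarith [hb]
  have hxto0 : Tendsto x atTop (nhds 0) := by
    apply tendsto_of_tendsto_of_tendsto_of_le_of_le' tendsto_const_nhds hU1to0
    · filter_upwards [hfacts] with d hf
      have h := hf.1
      simp only [hxdef]
      positivity
    · exact hxU1
  have hC2 : ∀ᶠ d : ℕ in atTop, ((d:ℝ)-2) * x d ≤ Real.log (B2 d) := by
    filter_upwards [hA, hfacts, hxU1, eventually_ge_atTop 3] with d ha hf hxu hd3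
    obtain ⟨hu0, hu1, _, _⟩ := hf
    have hx0 : 0 < x d := by simp only [hxdef]; positivity
    have h3d : (3:ℝ) ≤ (d:ℝ) := by exact_mod_cast hd3
    have hd2 : (0:ℝ) ≤ (d:ℝ)-2 := by linarith
    have hup : u d ^ (r-1) = x d ^ p := by
      have h1 : x d ^ p = u d ^ ((r:ℝ) * p) := by
        simp only [hxdef]
        rw [← Real.rpow_natCast (u d) r, ← Real.rpow_mul hu0.le]
      have h2 : (r:ℝ) * p = ((r-1 : ℕ):ℝ) := by
        rw [hpdef, Nat.cast_sub hr]
        push_cast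
        field_simp
      rw [h1, h2, Real.rpow_natCast]
    have hxp : x d ^ p ≤ U1 d ^ p := Real.rpow_le_rpow hx0.le hxu hp0
    have hBpos : (0:ℝ) < 1 + (r:ℝ)*((d:ℝ)-2)*u d ^ (r-1) := by
      have : (0:ℝ) ≤ (r:ℝ)*((d:ℝ)-2)*u d ^ (r-1) := by
        apply mul_nonneg (mul_nonneg hr0.le hd2) (by positivity)
      linarith
    refine ha.trans (Real.log_le_log hBpos ?_)
    simp only [hB2def]
    nlinarith [hxp, hup, mul_nonneg hr0.le hd2]
  have hD : ∀ᶠ d : ℕ in atTop,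
      (1 - x d) * Real.log (1/x d) ≤ (r:ℝ)*((d:ℝ)-1)*x d := by
    filter_upwards [hfacts, eventually_ge_atTop 3] with d hf hd3
    obtain ⟨hu0, hu1, hP2, _⟩ := hf
    have hx0 : 0 < x d := by simp only [hxdef]; positivity
    have hx1 : x d < 1 := by
      simp only [hxdef]; exact pow_lt_one₀ hu0.le hu1 (by omega)
    have h1x : 0 < 1 - x d := by linarith
    have h3d : (3:ℝ) ≤ (d:ℝ) := by exact_mod_cast hd3
    have hd1 : (0:ℝ) ≤ (d:ℝ)-1 := by linarith
    have hcast : ((d-1:ℕ):ℝ) = (d:ℝ)-1 := by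
      rw [Nat.cast_sub (by omega : 1 ≤ d)]; norm_num
    have hlogP2 : ((d:ℝ)-1) * Real.log (1 - x d) ≤ Real.log (u d) := by
      have h5 := Real.log_le_log (pow_pos h1x _) hP2
      rwa [Real.log_pow, hcast] at h5
    have hlogu : Real.log (u d) = Real.log (x d) / r := by
      simp only [hxdef]
      rw [Real.log_pow]
      field_simp
    have hceil : -(x d/(1 - x d)) ≤ Real.log (1 - x d) := by
      have h5 := Real.log_le_sub_one_of_pos (show (0:ℝ) < (1 - x d)⁻¹ by positivity)
      rw [Real.log_inv] at h5
      have h6 : (1 - x d)⁻¹ - 1 = x d / (1 - x d) := by field_simp; ring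
      rw [h6] at h5
      linarith
    have h7 : ((d:ℝ)-1) * (-(x d/(1-x d))) ≤ Real.log (x d)/r := by
      calc ((d:ℝ)-1) * (-(x d/(1-x d))) ≤ ((d:ℝ)-1) * Real.log (1 - x d) :=
            mul_le_mul_of_nonneg_left hceil hd1
        _ ≤ Real.log (u d) := hlogP2
        _ = Real.log (x d)/r := hlogu
    have h8 : (0:ℝ) < (r:ℝ)*(1-x d) := by positivity
    have h9 := mul_le_mul_of_nonneg_left h7 h8.le
    have e1 : (r:ℝ)*(1-x d) * (((d:ℝ)-1) * (-(x d/(1-x d)))) = -((r:ℝ)*((d:ℝ)-1)*x d) := by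
      field_simp
    have e2 : (r:ℝ)*(1-x d) * (Real.log (x d)/r) = (1-x d)*Real.log (x d) := by
      field_simp
    rw [e1, e2] at h9
    rw [one_div, Real.log_inv]
    have e3 : (1-x d)*(-Real.log (x d)) = -((1-x d)*Real.log (x d)) := by ring
    rw [e3]
    linarith
  have hE : ∀ᶠ d : ℕ in atTop,
      (1 - U1 d) * Real.log (((d:ℝ)-2)/l d) ≤ (r:ℝ)*((d:ℝ)-1)*x d := by
    filter_upwards [hD, hB, hfacts, hxU1, eventually_ge_atTop 3,
      hltop.eventually_ge_atTop 1,
      hU1to0.eventually (eventually_lt_nhds (by norm_num : (0:ℝ) < 1/2))] with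
      d hd hb hf hxu hd3 hl1 hU12
    obtain ⟨hu0, hu1, _, _⟩ := hf
    have hx0 : 0 < x d := by simp only [hxdef]; positivity
    have hx1 : x d < 1 := by
      simp only [hxdef]; exact pow_lt_one₀ hu0.le hu1 (by omega)
    have h3d : (3:ℝ) ≤ (d:ℝ) := by exact_mod_cast hd3
    have hd2pos : (0:ℝ) < (d:ℝ)-2 := by linarith
    have hlpos : (0:ℝ) < l d := by linarith
    have hq : ((d:ℝ)-2)/l d ≤ 1/x d := by
      rw [div_le_div_iff₀ hlpos hx0]
      nlinarith [hb]
    have hqlog : Real.log (((d:ℝ)-2)/l d) ≤ Real.log (1/x d) :=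
      Real.log_le_log (by positivity) hq
    have hU12' : l d / ((d:ℝ)-2) < 1/2 := hU12
    have hqnn : 0 ≤ Real.log (((d:ℝ)-2)/l d) := by
      apply Real.log_nonneg
      rw [le_div_iff₀ hlpos]
      rw [div_lt_iff₀ hd2pos] at hU12'
      linarith
    have hxleU1 : x d ≤ U1 d := hxu
    have hU1lt : U1 d < 1/2 := hU12
    have hmul : (1 - U1 d) * Real.log (((d:ℝ)-2)/l d) ≤ (1 - x d) * Real.log (1/x d) := by
      apply mul_le_mul (by linarith) hqlog hqnn (by linarith)
    exact hmul.trans hd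
  -- squeeze
  set G : ℕ → ℝ := fun d => (r:ℝ) * d * x d / L d with hGdef
  have hHi : ∀ᶠ d : ℕ in atTop,
      G d ≤ ((d:ℝ)/((d:ℝ)-2)) * ((r:ℝ) * (Real.log (B2 d) / L d)) := by
    filter_upwards [hC2, eventually_ge_atTop 3] with d hc2 hd3
    have h3d : (3:ℝ) ≤ (d:ℝ) := by exact_mod_cast hd3
    have hd2pos : (0:ℝ) < (d:ℝ)-2 := by linarith
    have hLpos : 0 < L d := Real.log_pos (by linarith)
    have e1 : G d = (((d:ℝ)/((d:ℝ)-2)) * ((r:ℝ) * (((d:ℝ)-2) * x d))) / L d := by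
      simp only [hGdef]
      field_simp
    have e2 : ((d:ℝ)/((d:ℝ)-2)) * ((r:ℝ)*(Real.log (B2 d)/L d))
        = (((d:ℝ)/((d:ℝ)-2)) * ((r:ℝ)*Real.log (B2 d)))/L d := by ring
    rw [e1, e2]
    have hnum : ((d:ℝ)/((d:ℝ)-2)) * ((r:ℝ) * (((d:ℝ)-2) * x d))
        ≤ ((d:ℝ)/((d:ℝ)-2)) * ((r:ℝ) * Real.log (B2 d)) := by
      apply mul_le_mul_of_nonneg_left _ (div_nonneg (by linarith) hd2pos.le)
      exact mul_le_mul_of_nonneg_left hc2 hr0.le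
    exact (div_le_div_iff_of_pos_right hLpos).mpr hnum
  have hLo : ∀ᶠ d : ℕ in atTop,
      ((d:ℝ)/((d:ℝ)-1)) * ((1 - U1 d) * (Real.log (((d:ℝ)-2)/l d) / L d)) ≤ G d := by
    filter_upwards [hE, eventually_ge_atTop 3] with d he hd3
    have h3d : (3:ℝ) ≤ (d:ℝ) := by exact_mod_cast hd3
    have hd1pos : (0:ℝ) < (d:ℝ)-1 := by linarith
    have hLpos : 0 < L d := Real.log_pos (by linarith)
    have e1 : G d = (((d:ℝ)/((d:ℝ)-1)) * ((r:ℝ) * (((d:ℝ)-1) * x d))) / L d := by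
      simp only [hGdef]
      field_simp
    have e2 : ((d:ℝ)/((d:ℝ)-1)) * ((1 - U1 d) * (Real.log (((d:ℝ)-2)/l d) / L d))
        = (((d:ℝ)/((d:ℝ)-1)) * ((1 - U1 d) * Real.log (((d:ℝ)-2)/l d)))/L d := by ring
    rw [e1, e2]
    have hnum : ((d:ℝ)/((d:ℝ)-1)) * ((1 - U1 d) * Real.log (((d:ℝ)-2)/l d))
        ≤ ((d:ℝ)/((d:ℝ)-1)) * ((r:ℝ) * (((d:ℝ)-1) * x d)) := by
      apply mul_le_mul_of_nonneg_left _ (div_nonneg (by linarith) hd1pos.le)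
      calc (1 - U1 d) * Real.log (((d:ℝ)-2)/l d) ≤ (r:ℝ)*(((d:ℝ)-1)* x d) := by
            have := he
            nlinarith [he]
        _ = (r:ℝ) * (((d:ℝ)-1) * x d) := by ring
    exact (div_le_div_iff_of_pos_right hLpos).mpr hnum
  have hratio2 : Tendsto (fun d : ℕ => Real.log (((d:ℝ)-2)/l d) / L d) atTop (nhds 1) := by
    have h1 : Tendsto (fun d : ℕ => Real.log ((d:ℝ)-2)/L d - Real.log (l d)/L d) atTop
        (nhds 1) := by
      simpa using hd2L.sub hlogl
    refine Tendsto.congr' ?_ h1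
    filter_upwards [hd2top.eventually_ge_atTop 1, hltop.eventually_ge_atTop 1] with d h2 h3
    rw [Real.log_div (by linarith) (by linarith)]
    exact div_sub_div_same _ _ _
  have hHilim : Tendsto (fun d : ℕ => ((d:ℝ)/((d:ℝ)-2)) * ((r:ℝ) * (Real.log (B2 d)/L d)))
      atTop (nhds 1) := by
    have h1 := (div_sub_tendsto 2).mul ((tendsto_const_nhds (x := (r:ℝ))).mul hlogB2)
    have e : (1:ℝ) * ((r:ℝ) * (1/(r:ℝ))) = 1 := by field_simp
    rwa [e] at h1
  have hLolim : Tendsto (fun d : ℕ =>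
      ((d:ℝ)/((d:ℝ)-1)) * ((1 - U1 d) * (Real.log (((d:ℝ)-2)/l d) / L d))) atTop (nhds 1) := by
    have h1 := (div_sub_tendsto 1).mul
      (((tendsto_const_nhds (x := (1:ℝ))).sub hU1to0).mul hratio2)
    have e : (1:ℝ) * (((1:ℝ) - 0) * 1) = 1 := by norm_num
    rwa [e] at h1
  have hG : Tendsto G atTop (nhds 1) :=
    tendsto_of_tendsto_of_tendsto_of_le_of_le' hLolim hHilim hLo hHi
  -- final assembly
  have hrpow : Tendsto (fun d : ℕ => G d ^ ((1:ℝ)/r)) atTop (nhds 1) := by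
    have h1 := hG.rpow_const (p := (1:ℝ)/r) (Or.inl one_ne_zero)
    simpa using h1
  have hone : Tendsto (fun d : ℕ => 1 - x d/((r:ℝ)+1)) atTop (nhds 1) := by
    have h1 := (tendsto_const_nhds (x := (1:ℝ))).sub (hxto0.div_const ((r:ℝ)+1))
    simpa using h1
  have hmain : Tendsto (fun d : ℕ => G d ^ ((1:ℝ)/r) * (1 - x d/((r:ℝ)+1))) atTop (nhds 1) := by
    simpa using hrpow.mul hone
  refine Tendsto.congr' ?_ hmain
  filter_upwards [hfacts, eventually_ge_atTop 3] with d hf hd3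
  obtain ⟨hu0, hu1, _, _⟩ := hf
  have h3d : (3:ℝ) ≤ (d:ℝ) := by exact_mod_cast hd3
  have hLpos : 0 < L d := Real.log_pos (by linarith)
  have hd0 : (0:ℝ) < (d:ℝ) := by linarith
  have hx0 : 0 < x d := by simp only [hxdef]; positivity
  have hG1 : G d = x d * ((r:ℝ)*d/L d) := by
    simp only [hGdef]
    field_simp
  have hx_r : x d ^ ((1:ℝ)/r) = u d := by
    simp only [hxdef]
    rw [← Real.rpow_natCast (u d) r, ← Real.rpow_mul hu0.le, mul_one_div,
      div_self (ne_of_gt hr0), Real.rpow_one]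
  have e : G d ^ ((1:ℝ)/r) = u d * ((r:ℝ)*(d:ℝ)/L d) ^ ((1:ℝ)/r) := by
    rw [hG1, Real.mul_rpow hx0.le (by positivity), hx_r]
  rw [e]
  have hupow : u d ^ (r+1) = x d * u d := by
    simp only [hxdef]
    ring
  rw [hupow]
  push_cast
  ring
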